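/- Let n, p, d be natural numbers with p ≥ 1, 2p ≤ n, and d ≤ n, and let M be a set of p pairwise-disjoint 2-element subsets of Fin n. Then the number of d-element subsets S of Fin n such that no element of M is contained in S is at most Σ_{k=0}^{d} C(2p, k) · C(n − 2p, d − k) · exp(−k(k−1)/(4p)), where C(·,·) denotes the binomial coefficient (with C(a,b) = 0 when b > a) and exp is the real exponential. -/

import Mathlib

open Finset

private lemma exp_step_aux (p k : ℕ) (hp : 1 ≤ p) (hk : k < p) :
    2 * ((p : ℝ) - k) * Real.exp ((k : ℝ) / (2 * p)) ≤ 2 * p - k := by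
  have hp0 : (0 : ℝ) < p := by exact_mod_cast hp
  have hkp : (k : ℝ) < p := by exact_mod_cast hk
  have hk0 : (0 : ℝ) ≤ k := Nat.cast_nonneg k
  have h1 : 1 - (k : ℝ) / (2 * p) ≤ Real.exp (-((k : ℝ) / (2 * p))) := by
    have := Real.add_one_le_exp (-((k : ℝ) / (2 * p))); linarith
  have key : 2 * ((p : ℝ) - k) ≤ (2 * p - k) * Real.exp (-((k : ℝ) / (2 * p))) := by
    have h3 : (2 * (p : ℝ) - k) * (1 - k / (2 * p)) = (2 * p - k) ^ 2 / (2 * p) := by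
      field_simp
    have h4 : 2 * ((p : ℝ) - k) ≤ (2 * p - k) ^ 2 / (2 * p) := by
      rw [le_div_iff₀ (by positivity)]; nlinarith [sq_nonneg (k : ℝ)]
    have h5 : (2 * (p : ℝ) - k) * (1 - k / (2 * p))
        ≤ (2 * p - k) * Real.exp (-((k : ℝ) / (2 * p))) :=
      mul_le_mul_of_nonneg_left h1 (by linarith)
    calc 2 * ((p : ℝ) - k) ≤ (2 * p - k) ^ 2 / (2 * p) := h4
      _ = (2 * (p : ℝ) - k) * (1 - k / (2 * p)) := h3.symm
      _ ≤ _ := h5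
  have h6 := mul_le_mul_of_nonneg_right key (Real.exp_pos ((k : ℝ) / (2 * p))).le
  have h7 : (2 * (p : ℝ) - k) * Real.exp (-((k : ℝ) / (2 * p))) * Real.exp ((k : ℝ) / (2 * p))
      = 2 * (p : ℝ) - k := by
    rw [mul_assoc, ← Real.exp_add, neg_add_cancel, Real.exp_zero, mul_one]
  calc 2 * ((p : ℝ) - k) * Real.exp ((k : ℝ) / (2 * p))
      = 2 * ((p : ℝ) - k) * Real.exp ((k : ℝ) / (2 * p)) := rfl
    _ ≤ (2 * (p : ℝ) - k) * Real.exp (-((k : ℝ) / (2 * p))) * Real.exp ((k : ℝ) / (2 * p)) := h6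
    _ = 2 * (p : ℝ) - k := h7

private lemma choose_exp_aux (p : ℕ) (hp : 1 ≤ p) (k : ℕ) :
    (p.choose k : ℝ) * 2 ^ k * Real.exp (((k : ℝ) * ((k : ℝ) - 1)) / (4 * p))
      ≤ ((2 * p).choose k : ℝ) := by
  have hp0 : (0 : ℝ) < p := by exact_mod_cast hp
  induction k with
  | zero => simp
  | succ k ih =>
    by_cases hk : k < p
    · have hk1 : (0 : ℝ) < (k : ℝ) + 1 := by positivity
      rw [← mul_le_mul_iff_left₀ hk1]
      have e1 : (p.choose (k + 1) : ℝ) * ((k : ℝ) + 1)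
          = (p.choose k : ℝ) * ((p : ℝ) - k) := by
        have h := Nat.choose_succ_right_eq p k
        have : ((p.choose (k + 1) * (k + 1) : ℕ) : ℝ) = ((p.choose k * (p - k) : ℕ) : ℝ) := by
          exact_mod_cast congrArg (Nat.cast (R := ℝ)) h
        push_cast [Nat.cast_sub hk.le] at this
        linarith
      have e2 : ((2 * p).choose (k + 1) : ℝ) * ((k : ℝ) + 1)
          = ((2 * p).choose k : ℝ) * (2 * (p : ℝ) - k) := by
        have h := Nat.choose_succ_right_eq (2 * p) k
        have hk2 : k ≤ 2 * p := by omega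
        have : (((2 * p).choose (k + 1) * (k + 1) : ℕ) : ℝ)
            = (((2 * p).choose k * (2 * p - k) : ℕ) : ℝ) := by
          exact_mod_cast congrArg (Nat.cast (R := ℝ)) h
        push_cast [Nat.cast_sub hk2] at this
        linarith
      have eexp : Real.exp ((((k : ℕ) + 1 : ℕ) : ℝ) * ((((k : ℕ) + 1 : ℕ) : ℝ) - 1) / (4 * p))
          = Real.exp (((k : ℝ) * ((k : ℝ) - 1)) / (4 * p)) * Real.exp ((k : ℝ) / (2 * p)) := by
        rw [← Real.exp_add]
        congr 1
        push_cast
        field_simp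
        ring
      have step := exp_step_aux p k hp hk
      have hnn1 : (0 : ℝ) ≤ 2 * ((p : ℝ) - k) * Real.exp ((k : ℝ) / (2 * p)) := by
        have : (0:ℝ) ≤ (p : ℝ) - k := by linarith [show (k:ℝ) < p from by exact_mod_cast hk]
        positivity
      have hnn2 : (0 : ℝ) ≤ ((2 * p).choose k : ℝ) := Nat.cast_nonneg _
      have mult := mul_le_mul ih step hnn1 hnn2
      calc (p.choose (k + 1) : ℝ) * 2 ^ (k + 1)
            * Real.exp ((((k : ℕ) + 1 : ℕ) : ℝ) * ((((k : ℕ) + 1 : ℕ) : ℝ) - 1) / (4 * p))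
            * ((k : ℝ) + 1)
          = ((p.choose (k + 1) : ℝ) * ((k : ℝ) + 1)) * 2 ^ (k + 1)
            * (Real.exp (((k : ℝ) * ((k : ℝ) - 1)) / (4 * p)) * Real.exp ((k : ℝ) / (2 * p))) := by
            rw [eexp]; ring
        _ = ((p.choose k : ℝ) * 2 ^ k * Real.exp (((k : ℝ) * ((k : ℝ) - 1)) / (4 * p)))
            * (2 * ((p : ℝ) - k) * Real.exp ((k : ℝ) / (2 * p))) := by
            rw [e1]; ring
        _ ≤ ((2 * p).choose k : ℝ) * (2 * (p : ℝ) - k) := mult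
        _ = ((2 * p).choose (k + 1) : ℝ) * ((k : ℝ) + 1) := e2.symm
    · have hz : p.choose (k + 1) = 0 := Nat.choose_eq_zero_of_lt (by omega)
      rw [hz]
      simp [Nat.cast_nonneg]

private lemma avoid_count_aux (n p k : ℕ) (M : Finset (Finset (Fin n)))
    (hedges : ∀ e ∈ M, e.card = 2)
    (hdisj : ∀ e ∈ M, ∀ f ∈ M, e ≠ f → Disjoint e f)
    (hMcard : M.card = p) :
    (((M.biUnion id).powersetCard k).filter (fun A => ∀ e ∈ M, ¬ e ⊆ A)).card
      ≤ p.choose k * 2 ^ k := by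
  classical
  set T : Finset (Fin n) := M.biUnion id with hT
  set s := ((T.powersetCard k).filter (fun A => ∀ e ∈ M, ¬ e ⊆ A)) with hs
  -- single point lemma
  have hsingle : ∀ A : Finset (Fin n), (∀ e ∈ M, ¬ e ⊆ A) →
      ∀ e ∈ M, ∀ a ∈ A, a ∈ e → e ∩ A = {a} := by
    intro A hav e he a haA hae
    ext b
    simp only [mem_inter, mem_singleton]
    constructor
    · rintro ⟨hbe, hbA⟩
      by_contra hba
      have hsub : {a, b} ⊆ e := by
        intro x hx
        simp only [mem_insert, mem_singleton] at hx
        rcases hx with rfl | rfl <;> assumption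
      have hcard : ({a, b} : Finset (Fin n)).card = 2 := by
        rw [card_insert_of_notMem (by simpa using Ne.symm hba), card_singleton]
      have : e = {a, b} := (eq_of_subset_of_card_le hsub (by rw [hedges e he, hcard])).symm
      exact hav e he (by
        rw [this]
        intro x hx
        simp only [mem_insert, mem_singleton] at hx
        rcases hx with rfl | rfl <;> assumption)
    · rintro rfl; exact ⟨hae, haA⟩
  -- the fiber map
  set F : Finset (Fin n) → Finset (Finset (Fin n)) :=
    fun A => M.filter (fun e => (e ∩ A).Nonempty) with hF
  have hFcard : ∀ A ∈ s, F A ∈ M.powersetCard k := by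
    intro A hA
    rw [hs, mem_filter, mem_powersetCard] at hA
    obtain ⟨⟨hAT, hAk⟩, hav⟩ := hA
    rw [mem_powersetCard]
    refine ⟨filter_subset _ _, ?_⟩
    have : (F A).card = A.card := by
      apply Finset.card_bij (fun e he => (e ∩ A).min' (mem_filter.mp he).2)
      · intro e he
        have := Finset.min'_mem (e ∩ A) (mem_filter.mp he).2
        exact (mem_inter.mp this).2
      · intro e1 h1 e2 h2 heq
        by_contra hne
        have m1 := Finset.min'_mem (e1 ∩ A) (mem_filter.mp h1).2
        have m2 := Finset.min'_mem (e2 ∩ A) (mem_filter.mp h2).2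
        rw [heq] at m1
        have hd := hdisj e1 (mem_filter.mp h1).1 e2 (mem_filter.mp h2).1 hne
        exact Finset.disjoint_left.mp hd (mem_inter.mp m1).1 (mem_inter.mp m2).1
      · intro a haA
        have haT : a ∈ T := hAT haA
        rw [hT, mem_biUnion] at haT
        obtain ⟨e, heM, hae⟩ := haT
        have hea : e ∩ A = {a} := hsingle A hav e heM a haA hae
        have heF : e ∈ F A := by
          rw [hF, mem_filter]
          exact ⟨heM, ⟨a, by rw [hea]; exact mem_singleton_self a⟩⟩
        refine ⟨e, heF, ?_⟩
        have h9 : (e ∩ A).min' (mem_filter.mp heF).2 ∈ ({a} : Finset (Fin n)) := by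
          rw [← hea]; exact Finset.min'_mem _ _
        exact Finset.mem_singleton.mp h9
    rw [this, hAk]
  rw [Finset.card_eq_sum_card_fiberwise hFcard]
  have hbound : ∀ E ∈ M.powersetCard k,
      (s.filter (fun A => F A = E)).card ≤ 2 ^ k := by
    intro E hE
    rw [mem_powersetCard] at hE
    obtain ⟨hEM, hEk⟩ := hE
    have hene : ∀ e ∈ E, e.Nonempty := by
      intro e he
      apply Finset.card_pos.mp
      rw [hedges e (hEM he)]; norm_num
    set g : Finset (Fin n) → ((e : Finset (Fin n)) → e ∈ E → Fin n) :=
      fun A e he =>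
        if h : (e ∩ A).Nonempty then (e ∩ A).min' h else e.min' (hene e he) with hg
    have hmaps : ∀ A ∈ s.filter (fun A => F A = E), g A ∈ E.pi (fun e => e) := by
      intro A hA
      rw [mem_filter] at hA
      obtain ⟨hAs, hAE⟩ := hA
      rw [Finset.mem_pi]
      intro e he
      have heF : e ∈ F A := by rw [hAE]; exact he
      have hne : (e ∩ A).Nonempty := (mem_filter.mp heF).2
      rw [hg]
      simp only [hne, dif_pos]
      exact (mem_inter.mp (Finset.min'_mem _ hne)).1
    have hinj : Set.InjOn g (s.filter (fun A => F A = E)) := by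
      intro A hA A' hA' heq
      simp only [coe_filter, Set.mem_setOf_eq] at hA hA'
      obtain ⟨hAs, hAE⟩ := hA
      obtain ⟨hA's, hA'E⟩ := hA'
      rw [hs, mem_filter, mem_powersetCard] at hAs hA's
      obtain ⟨⟨hAT, _⟩, hav⟩ := hAs
      obtain ⟨⟨hA'T, _⟩, hav'⟩ := hA's
      have hsub : ∀ (B B' : Finset (Fin n)), B ⊆ T → (∀ e ∈ M, ¬ e ⊆ B) →
          F B = E → F B' = E → g B = g B' → B ⊆ B' := by
        intro B B' hBT havB hBE hB'E hgeq a haB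
        have haT : a ∈ T := hBT haB
        rw [hT, mem_biUnion] at haT
        obtain ⟨e, heM, hae⟩ := haT
        have hea : e ∩ B = {a} := hsingle B havB e heM a haB hae
        have heF : e ∈ F B := by
          rw [hF, mem_filter]
          exact ⟨heM, ⟨a, by rw [hea]; exact mem_singleton_self a⟩⟩
        have heE : e ∈ E := by rw [← hBE]; exact heF
        have hne : (e ∩ B).Nonempty := ⟨a, by rw [hea]; exact mem_singleton_self a⟩
        have h1 : g B e heE = a := by
          rw [hg]
          simp only [hne, dif_pos]
          have h9 : (e ∩ B).min' hne ∈ ({a} : Finset (Fin n)) := by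
            rw [← hea]; exact Finset.min'_mem _ _
          exact Finset.mem_singleton.mp h9
        have heF' : e ∈ F B' := by rw [hB'E]; exact heE
        have hne' : (e ∩ B').Nonempty := (mem_filter.mp heF').2
        have h2 : g B' e heE = (e ∩ B').min' hne' := by
          rw [hg]; simp only [hne', dif_pos]
        have h3 : g B e heE = g B' e heE := by rw [hgeq]
        have : a ∈ e ∩ B' := by
          rw [← h1, h3, h2]
          exact Finset.min'_mem _ hne'
        exact (mem_inter.mp this).2
      exact Subset.antisymm (hsub A A' hAT hav hAE hA'E heq)
        (hsub A' A hA'T hav' hA'E hAE heq.symm)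
    have := Finset.card_le_card_of_injOn g hmaps hinj
    calc (s.filter (fun A => F A = E)).card ≤ (E.pi (fun e => e)).card := this
      _ = 2 ^ k := by
          rw [Finset.card_pi]
          rw [Finset.prod_congr rfl (fun e he => hedges e (hEM he))]
          rw [Finset.prod_const, hEk]
  calc ∑ E ∈ M.powersetCard k, (s.filter (fun A => F A = E)).card
      ≤ ∑ E ∈ M.powersetCard k, 2 ^ k := Finset.sum_le_sum hbound
    _ = p.choose k * 2 ^ k := by
        rw [Finset.sum_const, Finset.card_powersetCard, hMcard, smul_eq_mul]

/-- The number of `d`-element subsets of `Fin n` containing no edge of a matching `M`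
of `p` pairwise-disjoint edges is at most
`∑_{k=0}^{d} C(2p,k)·C(n−2p,d−k)·exp(−k(k−1)/(4p))`. -/
theorem matching_avoiding_subsets_bound (n p d : ℕ) (hp : 1 ≤ p) (h2p : 2 * p ≤ n)
    (hd : d ≤ n) (M : Finset (Finset (Fin n)))
    (hedges : ∀ e ∈ M, e.card = 2)
    (hdisj : ∀ e ∈ M, ∀ f ∈ M, e ≠ f → Disjoint e f)
    (hMcard : M.card = p) :
    ((((Finset.univ : Finset (Fin n)).powersetCard d).filter
        fun S => ∀ e ∈ M, ¬ e ⊆ S).card : ℝ)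
      ≤ ∑ k ∈ Finset.range (d + 1),
          ((2 * p).choose k : ℝ) * ((n - 2 * p).choose (d - k) : ℝ) *
            Real.exp (-((k : ℝ) * ((k : ℝ) - 1)) / (4 * (p : ℝ))) := by
  classical
  set T : Finset (Fin n) := M.biUnion id with hT
  have hTcard : T.card = 2 * p := by
    calc T.card = ∑ e ∈ M, (id e).card :=
          Finset.card_biUnion (fun e he f hf hne => hdisj e he f hf hne)
      _ = ∑ e ∈ M, 2 := Finset.sum_congr rfl (fun e he => hedges e he)
      _ = 2 * p := by rw [Finset.sum_const, hMcard, smul_eq_mul, Nat.mul_comm]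
  set s := (((Finset.univ : Finset (Fin n)).powersetCard d).filter
        fun S => ∀ e ∈ M, ¬ e ⊆ S) with hs
  -- natural number bound first
  have hnat : s.card ≤ ∑ k ∈ Finset.range (d + 1),
      p.choose k * 2 ^ k * (n - 2 * p).choose (d - k) := by
    have hfib : ∀ S ∈ s, (S ∩ T).card ∈ Finset.range (d + 1) := by
      intro S hS
      rw [hs, mem_filter, mem_powersetCard] at hS
      rw [Finset.mem_range]
      have : (S ∩ T).card ≤ S.card := Finset.card_le_card (inter_subset_left)
      omega
    rw [Finset.card_eq_sum_card_fiberwise hfib]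
    apply Finset.sum_le_sum
    intro k hk
    -- fiber injects into (avoiding k-subsets of T) × ((d-k)-subsets of Tᶜ)
    have hinj : (s.filter (fun S => (S ∩ T).card = k)).card
        ≤ (((T.powersetCard k).filter (fun A => ∀ e ∈ M, ¬ e ⊆ A))
            ×ˢ (Tᶜ.powersetCard (d - k))).card := by
      apply Finset.card_le_card_of_injOn (fun S => (S ∩ T, S \ T))
      · intro S hS
        rw [mem_coe, mem_filter] at hS
        obtain ⟨hSs, hSk⟩ := hS
        rw [hs, mem_filter, mem_powersetCard] at hSs
        obtain ⟨⟨_, hSd⟩, hav⟩ := hSs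
        rw [mem_coe, Finset.mem_product]
        constructor
        · rw [mem_filter, mem_powersetCard]
          refine ⟨⟨inter_subset_right, hSk⟩, ?_⟩
          intro e he hsub
          exact hav e he (hsub.trans inter_subset_left)
        · rw [mem_powersetCard]
          constructor
          · intro a ha
            rw [Finset.mem_compl]
            exact (Finset.mem_sdiff.mp ha).2
          · have hkd : k ≤ d := Nat.lt_succ_iff.mp (Finset.mem_range.mp hk)
            have hc := Finset.card_inter_add_card_sdiff S T
            show (S \ T).card = d - k
            omega
      · intro S hS S' hS' heq
        simp only [Prod.mk.injEq] at heq
        have hrec : ∀ X : Finset (Fin n), X ∩ T ∪ X \ T = X := by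
          intro X
          ext x
          simp only [Finset.mem_union, Finset.mem_inter, Finset.mem_sdiff]
          tauto
        rw [← hrec S, ← hrec S', heq.1, heq.2]
      -- done
    calc (s.filter (fun S => (S ∩ T).card = k)).card
        ≤ (((T.powersetCard k).filter (fun A => ∀ e ∈ M, ¬ e ⊆ A))
            ×ˢ (Tᶜ.powersetCard (d - k))).card := hinj
      _ = ((T.powersetCard k).filter (fun A => ∀ e ∈ M, ¬ e ⊆ A)).card
            * (Tᶜ.powersetCard (d - k)).card := Finset.card_product _ _
      _ ≤ p.choose k * 2 ^ k * (n - 2 * p).choose (d - k) := by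
          apply Nat.mul_le_mul
          · exact avoid_count_aux n p k M hedges hdisj hMcard
          · rw [Finset.card_powersetCard, Finset.card_compl, hTcard]
            simp [Fintype.card_fin]
  -- now cast and compare termwise
  calc (s.card : ℝ)
      ≤ ((∑ k ∈ Finset.range (d + 1),
          p.choose k * 2 ^ k * (n - 2 * p).choose (d - k) : ℕ) : ℝ) := by
        exact_mod_cast hnat
    _ = ∑ k ∈ Finset.range (d + 1),
          (p.choose k : ℝ) * 2 ^ k * ((n - 2 * p).choose (d - k) : ℝ) := by
        rw [Nat.cast_sum]
        refine Finset.sum_congr rfl fun k _ => ?_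
        push_cast
        ring
    _ ≤ ∑ k ∈ Finset.range (d + 1),
          ((2 * p).choose k : ℝ) * ((n - 2 * p).choose (d - k) : ℝ) *
            Real.exp (-((k : ℝ) * ((k : ℝ) - 1)) / (4 * (p : ℝ))) := by
        apply Finset.sum_le_sum
        intro k _
        have hce := choose_exp_aux p hp k
        have hE : Real.exp (-((k : ℝ) * ((k : ℝ) - 1)) / (4 * (p : ℝ)))
            = (Real.exp (((k : ℝ) * ((k : ℝ) - 1)) / (4 * p)))⁻¹ := by
          rw [← Real.exp_neg]
          congr 1
          ring
        have hkey : (p.choose k : ℝ) * 2 ^ k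
            ≤ ((2 * p).choose k : ℝ) * Real.exp (-((k : ℝ) * ((k : ℝ) - 1)) / (4 * (p : ℝ))) := by
          rw [hE, le_mul_inv_iff₀ (Real.exp_pos _)]
          exact hce
        have hc : (0 : ℝ) ≤ ((n - 2 * p).choose (d - k) : ℝ) := Nat.cast_nonneg _
        calc (p.choose k : ℝ) * 2 ^ k * ((n - 2 * p).choose (d - k) : ℝ)
            ≤ ((2 * p).choose k : ℝ) * Real.exp (-((k : ℝ) * ((k : ℝ) - 1)) / (4 * (p : ℝ)))
              * ((n - 2 * p).choose (d - k) : ℝ) := mul_le_mul_of_nonneg_right hkey hc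
          _ = ((2 * p).choose k : ℝ) * ((n - 2 * p).choose (d - k) : ℝ) *
              Real.exp (-((k : ℝ) * ((k : ℝ) - 1)) / (4 * (p : ℝ))) := by ring
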